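/- Every representation of a quiver of Dynkin type (in particular type A) over a field, not necessarily finite-dimensional, is a direct sum of finite-dimensional indecomposable representations. -/

import Mathlib

universe u

open Submodule Set



section LinAlg
variable {k : Type u} [Field k] {X : Type u} [AddCommGroup X] [Module k X]

/-- relative complement: for `A ≤ B` there is `P ≤ B` with `A ⊓ P = ⊥`, `A ⊔ P = B`. -/
lemma exists_rel_compl (A B : Submodule k X) (hAB : A ≤ B) :
    ∃ P : Submodule k X, P ≤ B ∧ A ⊓ P = ⊥ ∧ A ⊔ P = B := by
  obtain ⟨q, hq⟩ := Submodule.exists_isCompl (A.comap B.subtype)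
  refine ⟨q.map B.subtype, map_subtype_le _ _, ?_, ?_⟩
  · have := hq.inf_eq_bot
    apply eq_bot_iff.2
    rintro x ⟨hx1, hx2⟩
    obtain ⟨⟨y, hy⟩, hyq, rfl⟩ := hx2
    have : (⟨y, hy⟩ : B) ∈ A.comap B.subtype ⊓ q := ⟨hx1, hyq⟩
    rw [hq.inf_eq_bot] at this
    simpa using congrArg B.subtype this
  · apply le_antisymm (sup_le hAB (map_subtype_le _ _))
    intro x hx
    have : (⟨x, hx⟩ : B) ∈ A.comap B.subtype ⊔ q := by rw [hq.sup_eq_top]; trivial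
    obtain ⟨a, ha, b, hb, hab⟩ := Submodule.mem_sup.1 this
    refine Submodule.mem_sup.2 ⟨a, ha, b, ⟨b, hb, rfl⟩, ?_⟩
    simpa using congrArg B.subtype hab

lemma span_singleton_le_cases {x : X} {p : Submodule k X} (hp : p ≤ span k {x}) :
    p = ⊥ ∨ p = span k {x} := by
  by_cases hx : ∀ y ∈ p, y = 0
  · left; exact eq_bot_iff.2 fun y hy => (Submodule.mem_bot k).2 (hx y hy)
  · right
    push_neg at hx
    obtain ⟨y, hy, hy0⟩ := hx
    obtain ⟨c, rfl⟩ := Submodule.mem_span_singleton.1 (hp hy)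
    have hc : c ≠ 0 := by rintro rfl; simp at hy0
    refine le_antisymm hp ?_
    rw [Submodule.span_singleton_le_iff_mem]
    have := p.smul_mem c⁻¹ hy
    rwa [smul_smul, inv_mul_cancel₀ hc, one_smul] at this

/-- first element of a `Pairwise (≤)` list satisfying a predicate is ≤ all satisfying it. -/
lemma exists_min_of_mem {α : Type*} [Preorder α] (p : α → Prop) :
    ∀ (l : List α), l.Pairwise (· ≤ ·) → (∃ a ∈ l, p a) →
      ∃ a ∈ l, p a ∧ ∀ b ∈ l, p b → a ≤ b := by
  intro l
  induction l with
  | nil => rintro _ ⟨a, h, -⟩; simp at h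
  | cons c l ih =>
    intro hp hex
    rw [List.pairwise_cons] at hp
    by_cases hc : p c
    · exact ⟨c, List.mem_cons_self, hc, by
        rintro b hb -
        rcases List.mem_cons.1 hb with rfl | hb
        · exact le_refl _
        · exact hp.1 b hb⟩
    · obtain ⟨a, ha, hpa⟩ := hex
      rcases List.mem_cons.1 ha with rfl | ha
      · exact absurd hpa hc
      · obtain ⟨a, ha, hpa, hmin⟩ := ih hp.2 ⟨a, ha, hpa⟩
        exact ⟨a, List.mem_cons_of_mem _ ha, hpa, by
          rintro b hb hpb
          rcases List.mem_cons.1 hb with rfl | hb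
          · exact absurd hpb hc
          · exact hmin b hb hpb⟩



lemma exists_indep_span (Z : Submodule k X) :
    ∃ (τ : Type u) (t : τ → X), LinearIndependent k t ∧ span k (range t) = Z ∧ ∀ i, t i ∈ Z := by
  classical
  let b := Module.Basis.ofVectorSpace k Z
  refine ⟨_, fun i => (b i : X), b.linearIndependent.map' Z.subtype (ker_subtype Z), ?_, fun i => (b i).2⟩
  have : range (fun i => (b i : X)) = Z.subtype '' (range b) := by
    rw [← Set.range_comp]; rfl
  rw [this, ← Submodule.map_span, b.span_eq, Submodule.map_top, range_subtype]

/-- Extension of an adapted independent family to an adapted basis (flag version). -/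
lemma extend_adapted :
    ∀ (L : List (Submodule k X)), L.Pairwise (· ≤ ·) →
    ∀ (Y : Submodule k X) (η : Type u) (w : η → X),
      LinearIndependent k w → span k (range w) = Y →
      (∀ W ∈ L, W ⊓ Y ≤ span k (range w ∩ W)) →
      ∃ (τ : Type u) (t : τ → X),
        LinearIndependent k (Sum.elim w t) ∧ span k (range (Sum.elim w t)) = ⊤ ∧
        ∀ W ∈ L, W ≤ span k (range (Sum.elim w t) ∩ W) := by
  intro L
  induction L with
  | nil =>
    intro _ Y η w hw hwY _
    obtain ⟨Z, hZ⟩ := Submodule.exists_isCompl Y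
    obtain ⟨τ, t, ht, htZ, _⟩ := exists_indep_span Z
    refine ⟨τ, t, hw.sum_type ht (by rw [hwY, htZ]; exact hZ.disjoint), ?_, by simp⟩
    rw [Sum.elim_range, Submodule.span_union, hwY, htZ]
    exact hZ.sup_eq_top
  | cons W0 L ih =>
    intro hL Y η w hw hwY hadapt
    rw [List.pairwise_cons] at hL
    obtain ⟨P, hPW0, hPY', hPsup⟩ := exists_rel_compl (W0 ⊓ Y) W0 inf_le_left
    have hPY : P ⊓ Y = ⊥ := by
      rw [eq_bot_iff, ← hPY']
      rintro x ⟨h1, h2⟩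
      exact ⟨⟨hPW0 h1, h2⟩, h1⟩
    obtain ⟨ρ, pv, hpv, hpvP, hpvmem⟩ := exists_indep_span P
    -- new family
    have hw' : LinearIndependent k (Sum.elim w pv) := by
      refine hw.sum_type hpv ?_
      rw [hwY, hpvP, disjoint_comm]
      exact disjoint_iff.2 hPY
    have hw'span : span k (range (Sum.elim w pv)) = Y ⊔ P := by
      rw [Sum.elim_range, Submodule.span_union, hwY, hpvP]
    have hadapt' : ∀ W ∈ L, W ⊓ (Y ⊔ P) ≤ span k (range (Sum.elim w pv) ∩ W) := by
      intro W hWL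
      have hW0W : W0 ≤ W := hL.1 W hWL
      rintro x ⟨hxW, hxYP⟩
      obtain ⟨y, hy, p, hp, rfl⟩ := Submodule.mem_sup.1 hxYP
      have hpW : p ∈ W := hW0W (hPW0 hp)
      have hyW : y ∈ W := by
        have := W.sub_mem hxW hpW; simpa using this
      have h1 : y ∈ span k (range (Sum.elim w pv) ∩ W) := by
        refine Submodule.span_mono ?_ (hadapt W (List.mem_cons_of_mem _ hWL) ⟨hyW, hy⟩)
        rw [Sum.elim_range]
        exact inter_subset_inter_left _ subset_union_left
      have h2 : p ∈ span k (range (Sum.elim w pv) ∩ W) := by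
        rw [← hpvP] at hp
        refine Submodule.span_le.2 ?_ hp
        intro z hz
        obtain ⟨i, rfl⟩ := hz
        refine Submodule.subset_span ⟨⟨Sum.inr i, rfl⟩, hW0W (hPW0 (hpvmem i))⟩
      exact Submodule.add_mem _ h1 h2
    obtain ⟨τ', t', ht'indep, ht'span, ht'adapt⟩ := ih hL.2 (Y ⊔ P) (η ⊕ ρ) (Sum.elim w pv) hw' hw'span hadapt'
    refine ⟨ρ ⊕ τ', Sum.elim pv t', ?_, ?_, ?_⟩
    · have : Sum.elim (Sum.elim w pv) t' ∘ (Equiv.sumAssoc η ρ τ').symm = Sum.elim w (Sum.elim pv t') := by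
        ext x; rcases x with x | x | x <;> rfl
      rw [← this]
      exact (linearIndependent_equiv (Equiv.sumAssoc η ρ τ').symm).2 ht'indep
    · have hr : range (Sum.elim w (Sum.elim pv t')) = range (Sum.elim (Sum.elim w pv) t') := by
        simp [Sum.elim_range, union_assoc]
      rw [hr]; exact ht'span
    · have hr : range (Sum.elim w (Sum.elim pv t')) = range (Sum.elim (Sum.elim w pv) t') := by
        simp [Sum.elim_range, union_assoc]
      intro W hWmem
      rcases List.mem_cons.1 hWmem with rfl | hWL
      · -- W = W0
        refine le_of_eq_of_le hPsup.symm (sup_le ?_ ?_)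
        · refine le_trans (hadapt W (List.mem_cons_self)) (Submodule.span_mono ?_)
          rw [hr, Sum.elim_range, Sum.elim_range]
          refine inter_subset_inter_left _ ?_
          exact fun x hx => Or.inl (Or.inl hx)
        · refine le_of_eq_of_le hpvP.symm (Submodule.span_le.2 ?_)
          rintro z ⟨i, rfl⟩
          refine Submodule.subset_span ⟨?_, hPW0 (hpvmem i)⟩
          rw [hr, Sum.elim_range, Sum.elim_range]
          exact Or.inl (Or.inr ⟨i, rfl⟩)
      · rw [hr]; exact ht'adapt W hWL
  
end LinAlg


section Helpers
variable {α β : Type u}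

/-- equiv for subtypes of a sum when the right side is excluded. -/
def sumSubtypeEquivL (p : α ⊕ β → Prop) (q : α → Prop)
    (h1 : ∀ a, p (Sum.inl a) ↔ q a) (h2 : ∀ b, ¬ p (Sum.inr b)) :
    {x // p x} ≃ {a // q a} where
  toFun := fun ⟨x, hx⟩ => match x, hx with
    | Sum.inl a, hx => ⟨a, (h1 a).1 hx⟩
    | Sum.inr b, hx => absurd hx (h2 b)
  invFun := fun ⟨a, ha⟩ => ⟨Sum.inl a, (h1 a).2 ha⟩
  left_inv := by
    rintro ⟨x | x, hx⟩
    · rfl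
    · exact absurd hx (h2 x)
  right_inv := by rintro ⟨a, ha⟩; rfl

/-- equiv for subtypes of a sum when the right side is fully included. -/
def sumSubtypeEquivLR (p : α ⊕ β → Prop) (q : α → Prop)
    (h1 : ∀ a, p (Sum.inl a) ↔ q a) (h2 : ∀ b, p (Sum.inr b)) :
    {x // p x} ≃ {a // q a} ⊕ β where
  toFun := fun ⟨x, hx⟩ => match x, hx with
    | Sum.inl a, hx => Sum.inl ⟨a, (h1 a).1 hx⟩
    | Sum.inr b, _ => Sum.inr b
  invFun := fun y => match y with
    | Sum.inl ⟨a, ha⟩ => ⟨Sum.inl a, (h1 a).2 ha⟩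
    | Sum.inr b => ⟨Sum.inr b, h2 b⟩
  left_inv := by rintro ⟨x | x, hx⟩ <;> rfl
  right_inv := by rintro (⟨a, ha⟩ | b) <;> rfl

end Helpers

section Quiver
variable {k : Type u} [Field k] {n : ℕ}
  {V : Fin (n+1) → Type u} [∀ j, AddCommGroup (V j)] [∀ j, Module k (V j)]
  (f : ∀ i : Fin n, V i.castSucc →ₗ[k] V i.succ)
  (g : ∀ i : Fin n, V i.succ →ₗ[k] V i.castSucc)

/-- update-at-one-vertex family -/
noncomputable def vupd (j0 : Fin (n+1)) (x : V j0) : ∀ j, V j :=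
  Function.update (fun j => (0 : V j)) j0 x

lemma vupd_same (j0 : Fin (n+1)) (x : V j0) : vupd (V := V) j0 x j0 = x := by
  simp [vupd]

lemma vupd_ne (j0 : Fin (n+1)) (x : V j0) {j : Fin (n+1)} (h : j ≠ j0) :
    vupd (V := V) j0 x j = 0 := by
  simp [vupd, Function.update_of_ne h]

/-- A string decomposition of the restriction of the representation to vertices `0..m`,
adapted at vertex `m` to the list of subspaces `L`. -/
structure SD (m : ℕ) (hm : m < n + 1) (L : List (Submodule k (V ⟨m, hm⟩))) where
  σ : Type u
  a : σ → ℕ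
  b : σ → ℕ
  v : σ → ∀ j : Fin (n+1), V j
  ha : ∀ s, a s ≤ b s
  hb : ∀ s, b s ≤ m
  hzero : ∀ s (j : Fin (n+1)), (j.val < a s ∨ b s < j.val) → v s j = 0
  hcross : ∀ (s) (i : Fin n), a s ≤ i.val → i.val < b s →
    f i (v s i.castSucc) = v s i.succ ∨ g i (v s i.succ) = v s i.castSucc
  hendf : ∀ (s) (i : Fin n), i.val < m → b s = i.val → f i (v s i.castSucc) = 0
  hstartg : ∀ (s) (i : Fin n), i.val < m → a s = i.val + 1 → g i (v s i.succ) = 0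
  hindep : ∀ j : Fin (n+1), j.val ≤ m →
    LinearIndependent k (fun s : {s : σ // a s ≤ j.val ∧ j.val ≤ b s} => v s.1 j)
  hspan : ∀ j : Fin (n+1), j.val ≤ m →
    span k (range (fun s : {s : σ // a s ≤ j.val ∧ j.val ≤ b s} => v s.1 j)) = ⊤
  hadapt : ∀ W ∈ L, W ≤ span k
    (range (fun s : {s : σ // a s ≤ m ∧ m ≤ b s} => v s.1 ⟨m, hm⟩) ∩ W)

end Quiver
section Base
variable {k : Type u} [Field k] {n : ℕ}
  {V : Fin (n+1) → Type u} [∀ j, AddCommGroup (V j)] [∀ j, Module k (V j)]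
  (f : ∀ i : Fin n, V i.castSucc →ₗ[k] V i.succ)
  (g : ∀ i : Fin n, V i.succ →ₗ[k] V i.castSucc)

lemma exists_adapted_basis {X : Type u} [AddCommGroup X] [Module k X]
    (L : List (Submodule k X)) (hL : L.Pairwise (· ≤ ·)) :
    ∃ (τ : Type u) (t : τ → X), LinearIndependent k t ∧ span k (range t) = ⊤ ∧
      ∀ W ∈ L, W ≤ span k (range t ∩ W) := by
  obtain ⟨τ, t, hind, hsp, had⟩ := extend_adapted L hL ⊥ PEmpty (fun x => PEmpty.elim x)
    (linearIndependent_empty_type) (by rw [Set.range_eq_empty, Submodule.span_empty])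
    (fun W _ => by rw [inf_bot_eq]; exact bot_le)
  have hr : range (Sum.elim (fun x : PEmpty => PEmpty.elim x) t) = range t := by
    rw [Sum.elim_range, Set.range_eq_empty, Set.empty_union]
  refine ⟨τ, t, ?_, by rw [← hr]; exact hsp, fun W hW => by rw [← hr]; exact had W hW⟩
  have : t = Sum.elim (fun x : PEmpty => PEmpty.elim x) t ∘ Sum.inr := rfl
  rw [this]
  exact hind.comp Sum.inr Sum.inr_injective

lemma SD_base (h0 : 0 < n + 1) (L : List (Submodule k (V ⟨0, h0⟩)))
    (hL : L.Pairwise (· ≤ ·)) : Nonempty (SD f g 0 h0 L) := by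
  obtain ⟨τ, t, hind, hsp, had⟩ := exists_adapted_basis L hL
  refine ⟨⟨τ, fun _ => 0, fun _ => 0, fun s => vupd ⟨0, h0⟩ (t s),
    fun s => le_refl _, fun s => le_refl _, ?_, ?_, ?_, ?_, ?_, ?_, ?_⟩⟩
  · intro s j hj
    refine vupd_ne _ _ (fun h => ?_)
    rw [h] at hj; simp at hj
  · intro s i h1 h2; omega
  · intro s i hi h; omega
  · intro s i hi h; omega
  · intro j hj
    have hj0 : j = ⟨0, h0⟩ := Fin.ext (by simpa using hj)
    subst hj0
    simp only [vupd_same]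
    exact hind.comp Subtype.val Subtype.val_injective
  · intro j hj
    have hj0 : j = ⟨0, h0⟩ := Fin.ext (by simpa using hj)
    subst hj0
    refine le_antisymm le_top (le_trans hsp.ge (Submodule.span_mono ?_))
    rintro x ⟨i, rfl⟩
    exact ⟨⟨i, ⟨le_refl _, le_refl _⟩⟩, vupd_same _ _⟩
  · intro W hW
    refine le_trans (had W hW) (Submodule.span_mono (inter_subset_inter_left _ ?_))
    rintro x ⟨i, rfl⟩
    exact ⟨⟨i, ⟨le_refl _, le_refl _⟩⟩, vupd_same _ _⟩

end Base
section IndepHelpers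
variable {k : Type u} [Field k] {X X2 : Type u} [AddCommGroup X] [Module k X]
  [AddCommGroup X2] [Module k X2]

lemma indep_image_ne_zero (F : X →ₗ[k] X2) {ι : Type u} (u : ι → X)
    (hu : LinearIndependent k u)
    (hker : (LinearMap.ker F : Submodule k X) ≤ span k (range u ∩ (LinearMap.ker F : Set X))) :
    LinearIndependent k (fun e : {i // F (u i) ≠ 0} => F (u e.1)) := by
  have h1 : LinearIndependent k (fun e : {i // F (u i) ≠ 0} => u e.1) :=
    hu.comp _ Subtype.val_injective
  have hdisj : Disjoint (span k (range (fun e : {i // F (u i) ≠ 0} => u e.1)))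
      (LinearMap.ker F) := by
    have hr1 : range (fun e : {i // F (u i) ≠ 0} => u e.1) = u '' {i | F (u i) ≠ 0} := by
      rw [show (fun e : {i // F (u i) ≠ 0} => u e.1) = u ∘ Subtype.val from rfl,
        Set.range_comp, Subtype.range_coe_subtype]
    have hker2 : (LinearMap.ker F : Submodule k X) ≤ span k (u '' {i | F (u i) ≠ 0}ᶜ) := by
      refine le_trans hker (Submodule.span_mono ?_)
      rintro z ⟨⟨i, rfl⟩, hz⟩
      exact ⟨i, by simpa using hz, rfl⟩
    have hd := hu.disjoint_span_image
      (disjoint_compl_right : Disjoint {i | F (u i) ≠ 0} {i | F (u i) ≠ 0}ᶜ)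
    rw [hr1]
    exact Disjoint.mono_right hker2 hd
  exact h1.map hdisj

lemma indep_preimage_sum (G : X2 →ₗ[k] X) {η τ : Type u}
    (w1 : η → X2) (tk : τ → X2)
    (hGw : LinearIndependent k (fun e => G (w1 e)))
    (htk : LinearIndependent k tk) (htkspan : span k (range tk) = LinearMap.ker G) :
    LinearIndependent k (Sum.elim w1 tk) := by
  have hw1 : LinearIndependent k w1 := hGw.of_comp G
  refine hw1.sum_type htk ?_
  rw [htkspan, disjoint_iff, eq_bot_iff]
  rintro x ⟨hx1, hx2⟩
  rw [SetLike.mem_coe, Finsupp.mem_span_range_iff_exists_finsupp] at hx1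
  obtain ⟨c, rfl⟩ := hx1
  have h0 : Finsupp.linearCombination k (fun e => G (w1 e)) c = 0 := by
    rw [Finsupp.linearCombination_apply]
    have : G (c.sum fun i a => a • w1 i) = 0 := hx2
    rw [map_finsuppSum] at this
    simpa [map_smul] using this
  have := linearIndependent_iff.1 hGw c h0
  simp [this]
end IndepHelpers

section Step
variable {k : Type u} [Field k] {n : ℕ}
  {V : Fin (n+1) → Type u} [∀ j, AddCommGroup (V j)] [∀ j, Module k (V j)]
  {f : ∀ i : Fin n, V i.castSucc →ₗ[k] V i.succ}
  {g : ∀ i : Fin n, V i.succ →ₗ[k] V i.castSucc}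

/-- transport of independence and spanning at low vertices through a step -/
lemma step_low {m : ℕ} {hm : m < n+1} {L' : List (Submodule k (V ⟨m, hm⟩))}
    (D : SD f g m hm L') {τ : Type u}
    (a' b' : D.σ ⊕ τ → ℕ) (v' : (D.σ ⊕ τ) → ∀ j, V j)
    (ha'l : ∀ s, a' (Sum.inl s) = D.a s)
    (hb'l : ∀ s (j : ℕ), j ≤ m → (j ≤ b' (Sum.inl s) ↔ j ≤ D.b s))
    (ha'r : ∀ i, a' (Sum.inr i) = m+1)
    (hv'l : ∀ s (j : Fin (n+1)), j.val ≤ m → v' (Sum.inl s) j = D.v s j) :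
    ∀ j : Fin (n+1), j.val ≤ m →
      LinearIndependent k (fun s : {s // a' s ≤ j.val ∧ j.val ≤ b' s} => v' s.1 j) ∧
      span k (range (fun s : {s // a' s ≤ j.val ∧ j.val ≤ b' s} => v' s.1 j)) = ⊤ := by
  intro j hj
  let e : {s // a' s ≤ j.val ∧ j.val ≤ b' s} ≃ {s : D.σ // D.a s ≤ j.val ∧ j.val ≤ D.b s} :=
    sumSubtypeEquivL (fun s => a' s ≤ j.val ∧ j.val ≤ b' s)
    (fun s => D.a s ≤ j.val ∧ j.val ≤ D.b s)
    (fun s => by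
      show a' (Sum.inl s) ≤ j.val ∧ j.val ≤ b' (Sum.inl s) ↔ _
      rw [ha'l, hb'l s j.val hj])
    (fun i => by
      show ¬(a' (Sum.inr i) ≤ j.val ∧ j.val ≤ b' (Sum.inr i))
      rw [ha'r]
      rintro ⟨h1, -⟩
      omega)
  have hfam : (fun s : {s // a' s ≤ j.val ∧ j.val ≤ b' s} => v' s.1 j)
      = (fun s : {s // D.a s ≤ j.val ∧ j.val ≤ D.b s} => D.v s.1 j) ∘ e := by
    funext s
    obtain ⟨x | x, hx⟩ := s
    · exact hv'l x j hj
    · exact absurd hx.1 (by rw [ha'r]; omega)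
  constructor
  · rw [hfam]; exact (D.hindep j hj).comp e e.injective
  · rw [hfam, Function.Surjective.range_comp e.surjective]; exact D.hspan j hj

end Step
section StepSink
variable {k : Type u} [Field k] {n : ℕ}
  {V : Fin (n+1) → Type u} [∀ j, AddCommGroup (V j)] [∀ j, Module k (V j)]
  {f : ∀ i : Fin n, V i.castSucc →ₗ[k] V i.succ}
  {g : ∀ i : Fin n, V i.succ →ₗ[k] V i.castSucc}

lemma SD_step_sink (m : ℕ) (hmn : m < n) (hm : m < n+1) (hm1 : m+1 < n+1)
    (hg : g ⟨m, hmn⟩ = 0)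
    (L : List (Submodule k (V ⟨m+1, hm1⟩))) (hL : L.Pairwise (· ≤ ·))
    (IH : ∀ (L' : List (Submodule k (V ⟨m, hm⟩))), L'.Pairwise (· ≤ ·) →
      Nonempty (SD f g m hm L')) :
    Nonempty (SD f g (m+1) hm1 L) := by
  classical
  set i0 : Fin n := ⟨m, hmn⟩ with hi0
  let vm : Fin (n+1) := ⟨m, hm⟩
  let vm1 : Fin (n+1) := ⟨m+1, hm1⟩
  let F : V vm →ₗ[k] V vm1 := f i0
  -- the flag passed down to vertex m
  set K' : List (Submodule k (V vm)) :=
    LinearMap.ker F :: L.map (Submodule.comap F) with hK'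
  have hK'p : K'.Pairwise (· ≤ ·) := by
    rw [hK', List.pairwise_cons]
    constructor
    · intro W' hW'
      obtain ⟨W, _, rfl⟩ := List.mem_map.1 hW'
      intro x hx
      exact Submodule.mem_comap.2 (by rw [LinearMap.mem_ker.1 hx]; exact W.zero_mem)
    · exact List.Pairwise.map _ (fun a b hab => Submodule.comap_mono hab) hL
  obtain ⟨D⟩ := IH K' hK'p
  -- the family of string vectors at vertex m
  let uT : {s : D.σ // D.a s ≤ m ∧ m ≤ D.b s} → V vm := fun s => D.v s.1 vm
  have huT_indep : LinearIndependent k uT := D.hindep vm (le_refl m)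
  have huT_span : span k (range uT) = ⊤ := D.hspan vm (le_refl m)
  have hker_ad : (LinearMap.ker F : Submodule k (V vm)) ≤
      span k (range uT ∩ (LinearMap.ker F : Set (V vm))) :=
    D.hadapt (LinearMap.ker F) (List.mem_cons_self)
  -- the extension family
  let gate : D.σ → Prop := fun s => D.b s = m ∧ F (D.v s vm) ≠ 0
  let w : {s : D.σ // gate s} → V vm1 := fun e => F (D.v e.1 vm)
  -- independence of w
  have hw_indep : LinearIndependent k w := by
    have h1 := indep_image_ne_zero F uT huT_indep hker_ad
    let e : {s : D.σ // gate s} ≃ {i : {s : D.σ // D.a s ≤ m ∧ m ≤ D.b s} // F (uT i) ≠ 0} :=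
      { toFun := fun e => ⟨⟨e.1, ⟨le_trans (D.ha e.1) (le_of_eq e.2.1), le_of_eq e.2.1.symm⟩⟩, e.2.2⟩
        invFun := fun i => ⟨i.1.1, ⟨le_antisymm (D.hb i.1.1) i.1.2.2, i.2⟩⟩
        left_inv := fun e => rfl
        right_inv := fun i => by
          obtain ⟨⟨s, hs⟩, hi⟩ := i
          rfl }
    have he : w = (fun i : {i // F (uT i) ≠ 0} => F (uT i.1)) ∘ e := rfl
    rw [he]
    exact h1.comp e e.injective
  -- span of w is the range of F
  have hw_span : span k (range w) = LinearMap.range F := by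
    apply le_antisymm
    · rw [Submodule.span_le]
      rintro x ⟨e, rfl⟩
      exact ⟨D.v e.1 vm, rfl⟩
    · rw [LinearMap.range_eq_map, ← huT_span, Submodule.map_span]
      rw [← Submodule.span_insert_zero (s := range w)]
      apply Submodule.span_mono
      rintro z ⟨y, ⟨s, rfl⟩, rfl⟩
      by_cases h0 : F (uT s) = 0
      · exact Or.inl h0
      · exact Or.inr ⟨⟨s.1, ⟨le_antisymm (D.hb s.1) s.2.2, h0⟩⟩, rfl⟩
  -- hypothesis of extend_adapted
  have hw_ad : ∀ W ∈ L, W ⊓ LinearMap.range F ≤ span k (range w ∩ (W : Set (V vm1))) := by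
    intro W hW
    rintro x ⟨hxW, y, rfl⟩
    have hy : y ∈ Submodule.comap F W := Submodule.mem_comap.2 hxW
    have hyW := D.hadapt (Submodule.comap F W)
      (List.mem_cons_of_mem _ (List.mem_map.2 ⟨W, hW, rfl⟩)) hy
    have hFy : F y ∈ Submodule.map F (span k (range uT ∩ (Submodule.comap F W : Set (V vm)))) :=
      ⟨y, hyW, rfl⟩
    rw [Submodule.map_span] at hFy
    rw [← Submodule.span_insert_zero (s := range w ∩ (W : Set (V vm1)))]
    refine Submodule.span_mono ?_ hFy
    rintro z ⟨y', ⟨⟨s, rfl⟩, hy'W⟩, rfl⟩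
    by_cases h0 : F (uT s) = 0
    · exact Or.inl h0
    · exact Or.inr ⟨⟨⟨s.1, ⟨le_antisymm (D.hb s.1) s.2.2, h0⟩⟩, rfl⟩, hy'W⟩
  obtain ⟨τ, t, hco_ind, hco_sp, hco_ad⟩ :=
    extend_adapted L hL (LinearMap.range F) _ w hw_indep hw_span hw_ad
  -- new data
  let a' : D.σ ⊕ τ → ℕ := Sum.elim D.a (fun _ => m+1)
  let b' : D.σ ⊕ τ → ℕ := Sum.elim (fun s => if gate s then m+1 else D.b s) (fun _ => m+1)
  let v' : (D.σ ⊕ τ) → ∀ j : Fin (n+1), V j :=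
    Sum.elim (fun s => Function.update (D.v s) vm1 (F (D.v s vm)))
      (fun i => vupd vm1 (t i))
  have hb'if : ∀ s, b' (Sum.inl s) = if gate s then m+1 else D.b s := fun s => rfl
  have hv'high : ∀ s, v' (Sum.inl s) vm1 = F (D.v s vm) := by
    intro s
    show Function.update (D.v s) vm1 (F (D.v s vm)) vm1 = _
    rw [Function.update_self]
  have hv'low : ∀ s (j : Fin (n+1)), j ≠ vm1 → v' (Sum.inl s) j = D.v s j := by
    intro s j hj
    show Function.update (D.v s) vm1 (F (D.v s vm)) j = _
    rw [Function.update_of_ne hj]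
  have hne_vm1 : ∀ (j : Fin (n+1)), j.val ≠ m + 1 → j ≠ vm1 := by
    intro j hj h
    rw [h] at hj
    exact hj rfl
  -- the equivalence at the top vertex
  let e2 : {s' : D.σ ⊕ τ // a' s' ≤ m+1 ∧ m+1 ≤ b' s'} ≃ {s : D.σ // gate s} ⊕ τ :=
    sumSubtypeEquivLR _ gate
      (fun s => by
        show D.a s ≤ m+1 ∧ m+1 ≤ (if gate s then m+1 else D.b s) ↔ gate s
        constructor
        · rintro ⟨-, h2⟩
          by_contra hgs
          rw [if_neg hgs] at h2
          have := D.hb s; omega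
        · intro hgs
          rw [if_pos hgs]
          exact ⟨le_trans (D.ha s) (by rw [hgs.1]; omega), le_refl _⟩)
      (fun i => ⟨by show m+1 ≤ m+1; omega, le_refl _⟩)
  have hfam : (fun s' : {s' // a' s' ≤ m+1 ∧ m+1 ≤ b' s'} => v' s'.1 vm1)
      = (Sum.elim w t) ∘ e2 := by
    funext s'
    obtain ⟨x | x, hx⟩ := s'
    · exact hv'high x
    · exact vupd_same _ _
  refine ⟨⟨D.σ ⊕ τ, a', b', v', ?_, ?_, ?_, ?_, ?_, ?_, ?_, ?_, ?_⟩⟩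
  · -- ha
    rintro (s | i)
    · show D.a s ≤ if gate s then m+1 else D.b s
      by_cases h : gate s
      · rw [if_pos h]; have := D.ha s; have := D.hb s; omega
      · rw [if_neg h]; exact D.ha s
    · exact le_refl _
  · -- hb
    rintro (s | i)
    · show (if gate s then m+1 else D.b s) ≤ m+1
      by_cases h : gate s
      · rw [if_pos h]
      · rw [if_neg h]; have := D.hb s; omega
    · exact le_refl _
  · -- hzero
    rintro (s | i) j hj
    · by_cases hjm : j = vm1
      · subst hjm
        rw [hv'high]
        rcases hj with hj | hj
        · have := D.ha s; have := D.hb s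
          have hv : (vm1 : Fin (n+1)).val = m + 1 := rfl
          have ha' : a' (Sum.inl s) = D.a s := rfl
          omega
        · rw [hb'if] at hj
          by_cases hbs : D.b s = m
          · have hFu : F (D.v s vm) = 0 := by
              by_contra hne
              rw [if_pos ⟨hbs, hne⟩] at hj
              have hv : (vm1 : Fin (n+1)).val = m + 1 := rfl
              omega
            exact hFu
          · have h0 : D.v s vm = 0 := by
              apply D.hzero
              right
              have : (vm : Fin (n+1)).val = m := rfl
              have := D.hb s
              omega
            rw [h0, map_zero]
      · rw [hv'low s j hjm]
        apply D.hzero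
        rcases hj with hj | hj
        · exact Or.inl hj
        · right
          rw [hb'if] at hj
          by_cases hgs : gate s
          · rw [if_pos hgs] at hj
            have hjne : j.val ≠ m + 1 := fun h => hjm (Fin.ext h)
            rw [hgs.1]
            omega
          · rwa [if_neg hgs] at hj
    · apply vupd_ne
      apply hne_vm1
      rcases hj with hj | hj
      · rw [show a' (Sum.inr i) = m+1 from rfl] at hj
        omega
      · rw [show b' (Sum.inr i) = m+1 from rfl] at hj
        omega
  · -- hcross
    rintro (s | i) iE h1 h2
    · have ha'' : a' (Sum.inl s) = D.a s := rfl
      rw [ha''] at h1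
      rw [hb'if] at h2
      by_cases him : iE.val < m
      · have hne1 : iE.castSucc ≠ vm1 := hne_vm1 _ (by
          have : (iE.castSucc).val = iE.val := rfl
          omega)
        have hne2 : iE.succ ≠ vm1 := hne_vm1 _ (by
          have : (iE.succ).val = iE.val + 1 := rfl
          omega)
        rw [hv'low s _ hne1, hv'low s _ hne2]
        apply D.hcross s iE h1
        by_cases hgs : gate s
        · rw [hgs.1]; omega
        · rwa [if_neg hgs] at h2
      · -- iE.val = m, i.e. iE = i0
        have hiEm : iE.val = m := by
          by_cases hgs : gate s
          · have := D.ha s; have := D.hb s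
            have h2' := h2
            rw [if_pos hgs] at h2'
            have := hgs.1
            omega
          · rw [if_neg hgs] at h2
            have := D.hb s; omega
        have hiE0 : iE = i0 := Fin.ext hiEm
        subst hiE0
        have hgs : gate s := by
          by_contra hgs
          rw [if_neg hgs] at h2
          have := D.hb s
          omega
        left
        have hne1 : i0.castSucc ≠ vm1 := hne_vm1 _ (by
          have : (i0.castSucc).val = m := rfl
          omega)
        have hgoal : v' (Sum.inl s) i0.succ = F (D.v s vm) := hv'high s
        rw [hv'low s _ hne1, hgoal]
        rfl
    · have ha'' : a' (Sum.inr i) = m+1 := rfl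
      have hb'' : b' (Sum.inr i) = m+1 := rfl
      rw [ha''] at h1
      rw [hb''] at h2
      omega
  · -- hendf
    rintro (s | i) iE hiE hb2
    · rw [hb'if] at hb2
      by_cases hgs : gate s
      · rw [if_pos hgs] at hb2; omega
      · rw [if_neg hgs] at hb2
        by_cases him : iE.val < m
        · have hne1 : iE.castSucc ≠ vm1 := hne_vm1 _ (by
            have : (iE.castSucc).val = iE.val := rfl
            omega)
          rw [hv'low s _ hne1]
          exact D.hendf s iE him hb2
        · have hiEm : iE.val = m := by omega
          have hiE0 : iE = i0 := Fin.ext hiEm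
          subst hiE0
          have hne1 : i0.castSucc ≠ vm1 := hne_vm1 _ (by
            have : (i0.castSucc).val = m := rfl
            omega)
          rw [hv'low s _ hne1]
          have hbm : D.b s = m := by omega
          have hFu : F (D.v s vm) = 0 := by
            by_contra hne
            exact hgs ⟨hbm, hne⟩
          exact hFu
    · have hb'' : b' (Sum.inr i) = m+1 := rfl
      rw [hb''] at hb2
      omega
  · -- hstartg
    rintro (s | i) iE hiE ha2
    · have ha'' : a' (Sum.inl s) = D.a s := rfl
      rw [ha''] at ha2
      have him : iE.val < m := by
        have := D.ha s; have := D.hb s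
        omega
      have hne2 : iE.succ ≠ vm1 := hne_vm1 _ (by
        have : (iE.succ).val = iE.val + 1 := rfl
        omega)
      rw [hv'low s _ hne2]
      exact D.hstartg s iE him ha2
    · have ha'' : a' (Sum.inr i) = m+1 := rfl
      rw [ha''] at ha2
      have hiEm : iE.val = m := by omega
      have hiE0 : iE = i0 := Fin.ext hiEm
      subst hiE0
      rw [hg]
      rfl
  · -- hindep
    intro j hj
    by_cases hjm : j.val ≤ m
    · refine (step_low D a' b' v' (fun s => rfl) ?_ (fun i => rfl) ?_ j hjm).1
      · intro s jj hjj
        rw [hb'if]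
        by_cases hgs : gate s
        · rw [if_pos hgs, hgs.1]
          constructor <;> intro <;> omega
        · rw [if_neg hgs]
      · intro s jv hjv
        exact hv'low s jv (hne_vm1 _ (by omega))
    · have hjm1 : j = vm1 := Fin.ext (by
        change j.val ≤ m + 1 at hj
        show j.val = m+1
        omega)
      subst hjm1
      rw [show (vm1 : Fin (n+1)).val = m + 1 from rfl] at *
      rw [hfam]
      exact hco_ind.comp e2 e2.injective
  · -- hspan
    intro j hj
    by_cases hjm : j.val ≤ m
    · refine (step_low D a' b' v' (fun s => rfl) ?_ (fun i => rfl) ?_ j hjm).2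
      · intro s jj hjj
        rw [hb'if]
        by_cases hgs : gate s
        · rw [if_pos hgs, hgs.1]
          constructor <;> intro <;> omega
        · rw [if_neg hgs]
      · intro s jv hjv
        exact hv'low s jv (hne_vm1 _ (by omega))
    · have hjm1 : j = vm1 := Fin.ext (by
        change j.val ≤ m + 1 at hj
        show j.val = m+1
        omega)
      subst hjm1
      rw [hfam, Function.Surjective.range_comp e2.surjective]
      exact hco_sp
  · -- hadapt
    intro W hW
    refine le_trans (hco_ad W hW) (Submodule.span_mono (inter_subset_inter_left _ ?_))
    rintro x ⟨(e | i), rfl⟩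
    · refine ⟨⟨Sum.inl e.1, ⟨le_trans (D.ha e.1) (by rw [e.2.1]; omega), ?_⟩⟩, ?_⟩
      · show m+1 ≤ b' (Sum.inl e.1)
        rw [hb'if, if_pos e.2]
      · exact hv'high e.1
    · exact ⟨⟨Sum.inr i, ⟨le_refl _, le_refl _⟩⟩, vupd_same _ _⟩

end StepSink
section StepSource
variable {k : Type u} [Field k] {n : ℕ}
  {V : Fin (n+1) → Type u} [∀ j, AddCommGroup (V j)] [∀ j, Module k (V j)]
  {f : ∀ i : Fin n, V i.castSucc →ₗ[k] V i.succ}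
  {g : ∀ i : Fin n, V i.succ →ₗ[k] V i.castSucc}

lemma SD_step_source (m : ℕ) (hmn : m < n) (hm : m < n+1) (hm1 : m+1 < n+1)
    (hf : f ⟨m, hmn⟩ = 0)
    (L : List (Submodule k (V ⟨m+1, hm1⟩))) (hL : L.Pairwise (· ≤ ·))
    (IH : ∀ (L' : List (Submodule k (V ⟨m, hm⟩))), L'.Pairwise (· ≤ ·) →
      Nonempty (SD f g m hm L')) :
    Nonempty (SD f g (m+1) hm1 L) := by
  classical
  set i0 : Fin n := ⟨m, hmn⟩ with hi0
  let vm : Fin (n+1) := ⟨m, hm⟩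
  let vm1 : Fin (n+1) := ⟨m+1, hm1⟩
  let G : V vm1 →ₗ[k] V vm := g i0
  -- the flag passed down to vertex m
  set K' : List (Submodule k (V vm)) :=
    (L.map (Submodule.map G)) ++ [LinearMap.range G] with hK'
  have hK'p : K'.Pairwise (· ≤ ·) := by
    rw [hK', List.pairwise_append]
    refine ⟨List.Pairwise.map _ (fun a b hab => Submodule.map_mono hab) hL,
      List.pairwise_singleton _ _, ?_⟩
    intro W' hW' W'' hW''
    obtain ⟨W, _, rfl⟩ := List.mem_map.1 hW'
    rw [List.mem_singleton] at hW''
    subst hW''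
    exact LinearMap.map_le_range
  obtain ⟨D⟩ := IH K' hK'p
  -- the family of string vectors at vertex m
  let uT : {s : D.σ // D.a s ≤ m ∧ m ≤ D.b s} → V vm := fun s => D.v s.1 vm
  have huT_indep : LinearIndependent k uT := D.hindep vm (le_refl m)
  have huT_span : span k (range uT) = ⊤ := D.hspan vm (le_refl m)
  have hA1 : ∀ W ∈ L, Submodule.map G W ≤
      span k (range uT ∩ (Submodule.map G W : Set (V vm))) := by
    intro W hW
    exact D.hadapt _ (List.mem_append_left _ (List.mem_map.2 ⟨W, hW, rfl⟩))
  have hA2 : (LinearMap.range G : Submodule k (V vm)) ≤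
      span k (range uT ∩ (LinearMap.range G : Set (V vm))) :=
    D.hadapt _ (List.mem_append_right _ (List.mem_singleton_self _))
  -- choice of preimages
  have hx : ∀ s : D.σ, ∃ xs : V vm1, (D.v s vm ∈ LinearMap.range G → G xs = D.v s vm) ∧
      (∀ W ∈ L, D.v s vm ∈ Submodule.map G W → xs ∈ W) := by
    intro s
    by_cases hex : ∃ W ∈ L, D.v s vm ∈ Submodule.map G W
    · obtain ⟨W0, hW0L, hW0, hmin⟩ :=
        exists_min_of_mem (fun W => D.v s vm ∈ Submodule.map G W) L hL hex
      obtain ⟨xs, hxW0, hGx⟩ := Submodule.mem_map.1 hW0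
      exact ⟨xs, fun _ => hGx, fun W hWL hmem => hmin W hWL hmem hxW0⟩
    · push_neg at hex
      by_cases hrg : D.v s vm ∈ LinearMap.range G
      · obtain ⟨xs, hGx⟩ := hrg
        exact ⟨xs, fun _ => hGx, fun W hWL hmem => absurd hmem (hex W hWL)⟩
      · exact ⟨0, fun h => absurd h hrg, fun W hWL hmem => absurd hmem (hex W hWL)⟩
  choose x hx1 hx2 using hx
  let gate : D.σ → Prop := fun s => D.b s = m ∧ D.v s vm ∈ LinearMap.range G
  -- basis of the kernel adapted to L
  let Lk : List (Submodule k ↥(LinearMap.ker G)) :=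
    L.map (fun W => Submodule.comap (LinearMap.ker G).subtype W)
  have hLkp : Lk.Pairwise (· ≤ ·) :=
    List.Pairwise.map _ (fun a b hab => Submodule.comap_mono hab) hL
  obtain ⟨τk, tk0, htk0_ind, htk0_sp, htk0_ad⟩ := exists_adapted_basis Lk hLkp
  let tk : τk → V vm1 := fun i => (tk0 i : V vm1)
  have htk_ind : LinearIndependent k tk :=
    htk0_ind.map' (LinearMap.ker G).subtype (Submodule.ker_subtype _)
  have htk_range : range tk = (LinearMap.ker G).subtype '' (range tk0) := by
    rw [← Set.range_comp]; rfl
  have htk_span : span k (range tk) = LinearMap.ker G := by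
    rw [htk_range, ← Submodule.map_span, htk0_sp, Submodule.map_top, Submodule.range_subtype]
  have htk_mem : ∀ i, tk i ∈ LinearMap.ker G := fun i => (tk0 i).2
  have htk_ad : ∀ W ∈ L, (LinearMap.ker G ⊓ W : Submodule k (V vm1)) ≤
      span k (range tk ∩ (W : Set (V vm1))) := by
    intro W hW
    rintro z ⟨hz1, hz2⟩
    have hz' : (⟨z, hz1⟩ : ↥(LinearMap.ker G)) ∈
        Submodule.comap (LinearMap.ker G).subtype W := hz2
    have hmem := htk0_ad _ (List.mem_map.2 ⟨W, hW, rfl⟩) hz'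
    have hmap : z ∈ Submodule.map (LinearMap.ker G).subtype
        (span k (range tk0 ∩ (Submodule.comap (LinearMap.ker G).subtype W : Set _))) :=
      ⟨_, hmem, rfl⟩
    rw [Submodule.map_span] at hmap
    refine Submodule.span_mono ?_ hmap
    rintro y ⟨y0, ⟨⟨i, rfl⟩, hy0⟩, rfl⟩
    exact ⟨⟨i, rfl⟩, hy0⟩
  -- the extended family
  let w1 : {s : D.σ // gate s} → V vm1 := fun e => x e.1
  have hGw1 : ∀ e : {s : D.σ // gate s}, G (w1 e) = D.v e.1 vm := fun e => hx1 e.1 e.2.2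
  have hGw1_indep : LinearIndependent k (fun e : {s : D.σ // gate s} => G (w1 e)) := by
    have hfe : (fun e : {s : D.σ // gate s} => G (w1 e)) = uT ∘
        (fun e : {s : D.σ // gate s} =>
          (⟨e.1, ⟨le_trans (D.ha e.1) (le_of_eq e.2.1), le_of_eq e.2.1.symm⟩⟩ :
            {s : D.σ // D.a s ≤ m ∧ m ≤ D.b s})) := by
      funext e
      exact hGw1 e
    rw [hfe]
    refine huT_indep.comp _ ?_
    intro e e' h
    have h2 : ((⟨e.1, _⟩ : {s : D.σ // D.a s ≤ m ∧ m ≤ D.b s}) : D.σ)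
        = ((⟨e'.1, _⟩ : {s : D.σ // D.a s ≤ m ∧ m ≤ D.b s}) : D.σ) := congrArg Subtype.val h
    exact Subtype.ext h2
  have hw_ind : LinearIndependent k (Sum.elim w1 tk) :=
    indep_preimage_sum G w1 tk hGw1_indep htk_ind htk_span
  -- spanning and adaptedness at the top
  have himg : ∀ (y : V vm1), y ∈ span k (range (Sum.elim w1 tk)) := by
    intro y
    have h1 : G y ∈ span k (range uT ∩ (LinearMap.range G : Set (V vm))) := hA2 ⟨y, rfl⟩
    have h2 : span k (range uT ∩ (LinearMap.range G : Set (V vm))) ≤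
        Submodule.map G (span k (range w1)) := by
      rw [Submodule.map_span]
      apply Submodule.span_mono
      rintro z ⟨⟨s, rfl⟩, hzr⟩
      refine ⟨w1 ⟨s.1, ⟨le_antisymm (D.hb s.1) s.2.2, hzr⟩⟩, ⟨_, rfl⟩, ?_⟩
      exact hGw1 _
    obtain ⟨z', hz', hGz'⟩ := h2 h1
    have hyk : y - z' ∈ LinearMap.ker G := by
      rw [LinearMap.mem_ker, map_sub, hGz', sub_self]
    rw [← htk_span] at hyk
    have hdec : y = z' + (y - z') := by abel
    rw [hdec, Sum.elim_range, Submodule.span_union]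
    exact Submodule.add_mem _ (Submodule.mem_sup_left hz') (Submodule.mem_sup_right hyk)
  have hadapt_top : ∀ W ∈ L, W ≤
      span k (range (Sum.elim w1 tk) ∩ (W : Set (V vm1))) := by
    intro W hW y hyW
    have h1 : G y ∈ span k (range uT ∩ (Submodule.map G W : Set (V vm))) :=
      hA1 W hW ⟨y, hyW, rfl⟩
    have h2 : span k (range uT ∩ (Submodule.map G W : Set (V vm))) ≤
        Submodule.map G (span k (range w1 ∩ (W : Set (V vm1)))) := by
      rw [Submodule.map_span]
      apply Submodule.span_mono
      rintro z ⟨⟨s, rfl⟩, hzr⟩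
      have hgs : gate s.1 := ⟨le_antisymm (D.hb s.1) s.2.2, LinearMap.map_le_range hzr⟩
      refine ⟨w1 ⟨s.1, hgs⟩, ⟨⟨_, rfl⟩, hx2 s.1 W hW hzr⟩, hGw1 _⟩
    obtain ⟨z', hz', hGz'⟩ := h2 h1
    have hz'W : z' ∈ W := by
      have : span k (range w1 ∩ (W : Set (V vm1))) ≤ W := by
        rw [Submodule.span_le]
        exact inter_subset_right
      exact this hz'
    have hyk : y - z' ∈ LinearMap.ker G ⊓ W := by
      refine Submodule.mem_inf.2 ⟨?_, ?_⟩
      · rw [LinearMap.mem_ker, map_sub, hGz', sub_self]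
      · exact W.sub_mem hyW hz'W
    have hyk2 := htk_ad W hW hyk
    have hdec : y = z' + (y - z') := by abel
    rw [hdec]
    refine Submodule.add_mem _ ?_ ?_
    · refine Submodule.span_mono ?_ hz'
      refine inter_subset_inter_left _ ?_
      rw [Sum.elim_range]
      exact subset_union_left
    · refine Submodule.span_mono ?_ hyk2
      refine inter_subset_inter_left _ ?_
      rw [Sum.elim_range]
      exact subset_union_right
  -- new data
  let a' : D.σ ⊕ τk → ℕ := Sum.elim D.a (fun _ => m+1)
  let b' : D.σ ⊕ τk → ℕ := Sum.elim (fun s => if gate s then m+1 else D.b s) (fun _ => m+1)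
  let v' : (D.σ ⊕ τk) → ∀ j : Fin (n+1), V j :=
    Sum.elim (fun s => Function.update (D.v s) vm1 (if gate s then x s else 0))
      (fun i => vupd vm1 (tk i))
  have hb'if : ∀ s, b' (Sum.inl s) = if gate s then m+1 else D.b s := fun s => rfl
  have hv'high : ∀ s, v' (Sum.inl s) vm1 = (if gate s then x s else 0) := by
    intro s
    show Function.update (D.v s) vm1 _ vm1 = _
    rw [Function.update_self]
  have hv'low : ∀ s (j : Fin (n+1)), j ≠ vm1 → v' (Sum.inl s) j = D.v s j := by
    intro s j hj
    show Function.update (D.v s) vm1 _ j = _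
    rw [Function.update_of_ne hj]
  have hne_vm1 : ∀ (j : Fin (n+1)), j.val ≠ m + 1 → j ≠ vm1 := by
    intro j hj h
    rw [h] at hj
    exact hj rfl
  let e2 : {s' : D.σ ⊕ τk // a' s' ≤ m+1 ∧ m+1 ≤ b' s'} ≃ {s : D.σ // gate s} ⊕ τk :=
    sumSubtypeEquivLR _ gate
      (fun s => by
        show D.a s ≤ m+1 ∧ m+1 ≤ (if gate s then m+1 else D.b s) ↔ gate s
        constructor
        · rintro ⟨-, h2⟩
          by_contra hgs
          rw [if_neg hgs] at h2
          have := D.hb s; omega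
        · intro hgs
          rw [if_pos hgs]
          exact ⟨le_trans (D.ha s) (by rw [hgs.1]; omega), le_refl _⟩)
      (fun i => ⟨by show m+1 ≤ m+1; omega, le_refl _⟩)
  have hfam : (fun s' : {s' // a' s' ≤ m+1 ∧ m+1 ≤ b' s'} => v' s'.1 vm1)
      = (Sum.elim w1 tk) ∘ e2 := by
    funext s'
    obtain ⟨sx | sx, hx'⟩ := s'
    · have hgs : gate sx := by
        rcases hx' with ⟨-, h2⟩
        by_contra hgs
        have hb2 : b' (Sum.inl sx) = D.b sx := by
          rw [hb'if, if_neg hgs]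
        rw [hb2] at h2
        have := D.hb sx; omega
      rw [hv'high, if_pos hgs]
      rfl
    · exact vupd_same _ _
  refine ⟨⟨D.σ ⊕ τk, a', b', v', ?_, ?_, ?_, ?_, ?_, ?_, ?_, ?_, ?_⟩⟩
  · -- ha
    rintro (s | i)
    · show D.a s ≤ if gate s then m+1 else D.b s
      by_cases h : gate s
      · rw [if_pos h]; have := D.ha s; have := D.hb s; omega
      · rw [if_neg h]; exact D.ha s
    · exact le_refl _
  · -- hb
    rintro (s | i)
    · show (if gate s then m+1 else D.b s) ≤ m+1
      by_cases h : gate s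
      · rw [if_pos h]
      · rw [if_neg h]; have := D.hb s; omega
    · exact le_refl _
  · -- hzero
    rintro (s | i) j hj
    · by_cases hjm : j = vm1
      · subst hjm
        rw [hv'high]
        rcases hj with hj | hj
        · have := D.ha s; have := D.hb s
          have hv : (vm1 : Fin (n+1)).val = m + 1 := rfl
          have ha'' : a' (Sum.inl s) = D.a s := rfl
          omega
        · rw [hb'if] at hj
          by_cases hgs : gate s
          · rw [if_pos hgs] at hj
            have hv : (vm1 : Fin (n+1)).val = m + 1 := rfl
            omega
          · rw [if_neg hgs]
      · rw [hv'low s j hjm]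
        apply D.hzero
        rcases hj with hj | hj
        · exact Or.inl hj
        · right
          rw [hb'if] at hj
          by_cases hgs : gate s
          · rw [if_pos hgs] at hj
            have hjne : j.val ≠ m + 1 := fun h => hjm (Fin.ext h)
            rw [hgs.1]
            omega
          · rwa [if_neg hgs] at hj
    · apply vupd_ne
      apply hne_vm1
      rcases hj with hj | hj
      · rw [show a' (Sum.inr i) = m+1 from rfl] at hj
        omega
      · rw [show b' (Sum.inr i) = m+1 from rfl] at hj
        omega
  · -- hcross
    rintro (s | i) iE h1 h2
    · have ha'' : a' (Sum.inl s) = D.a s := rfl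
      rw [ha''] at h1
      rw [hb'if] at h2
      by_cases him : iE.val < m
      · have hne1 : iE.castSucc ≠ vm1 := hne_vm1 _ (by
          have : (iE.castSucc).val = iE.val := rfl
          omega)
        have hne2 : iE.succ ≠ vm1 := hne_vm1 _ (by
          have : (iE.succ).val = iE.val + 1 := rfl
          omega)
        rw [hv'low s _ hne1, hv'low s _ hne2]
        apply D.hcross s iE h1
        by_cases hgs : gate s
        · rw [hgs.1]; omega
        · rwa [if_neg hgs] at h2
      · have hiEm : iE.val = m := by
          by_cases hgs : gate s
          · have := D.ha s; have := D.hb s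
            have h2' := h2
            rw [if_pos hgs] at h2'
            have := hgs.1
            omega
          · rw [if_neg hgs] at h2
            have := D.hb s; omega
        have hiE0 : iE = i0 := Fin.ext hiEm
        subst hiE0
        have hgs : gate s := by
          by_contra hgs
          rw [if_neg hgs] at h2
          have := D.hb s
          omega
        right
        have hne1 : i0.castSucc ≠ vm1 := hne_vm1 _ (by
          have : (i0.castSucc).val = m := rfl
          omega)
        have hgoal : v' (Sum.inl s) i0.succ = x s := by
          have := hv'high s
          rw [if_pos hgs] at this
          exact this
        rw [hv'low s _ hne1, hgoal]
        exact hx1 s hgs.2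
    · have ha'' : a' (Sum.inr i) = m+1 := rfl
      have hb'' : b' (Sum.inr i) = m+1 := rfl
      rw [ha''] at h1
      rw [hb''] at h2
      omega
  · -- hendf
    rintro (s | i) iE hiE hb2
    · rw [hb'if] at hb2
      by_cases hgs : gate s
      · rw [if_pos hgs] at hb2; omega
      · rw [if_neg hgs] at hb2
        by_cases him : iE.val < m
        · have hne1 : iE.castSucc ≠ vm1 := hne_vm1 _ (by
            have : (iE.castSucc).val = iE.val := rfl
            omega)
          rw [hv'low s _ hne1]
          exact D.hendf s iE him hb2
        · have hiEm : iE.val = m := by omega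
          have hiE0 : iE = i0 := Fin.ext hiEm
          subst hiE0
          rw [hf]
          rfl
    · have hb'' : b' (Sum.inr i) = m+1 := rfl
      rw [hb''] at hb2
      omega
  · -- hstartg
    rintro (s | i) iE hiE ha2
    · have ha'' : a' (Sum.inl s) = D.a s := rfl
      rw [ha''] at ha2
      have him : iE.val < m := by
        have := D.ha s; have := D.hb s
        omega
      have hne2 : iE.succ ≠ vm1 := hne_vm1 _ (by
        have : (iE.succ).val = iE.val + 1 := rfl
        omega)
      rw [hv'low s _ hne2]
      exact D.hstartg s iE him ha2
    · have ha'' : a' (Sum.inr i) = m+1 := rfl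
      rw [ha''] at ha2
      have hiEm : iE.val = m := by omega
      have hiE0 : iE = i0 := Fin.ext hiEm
      subst hiE0
      have hval : v' (Sum.inr i) i0.succ = tk i := vupd_same _ _
      show G (v' (Sum.inr i) i0.succ) = 0
      rw [hval]
      exact LinearMap.mem_ker.1 (htk_mem i)
  · -- hindep
    intro j hj
    by_cases hjm : j.val ≤ m
    · refine (step_low D a' b' v' (fun s => rfl) ?_ (fun i => rfl) ?_ j hjm).1
      · intro s jj hjj
        rw [hb'if]
        by_cases hgs : gate s
        · rw [if_pos hgs, hgs.1]
          constructor <;> intro <;> omega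
        · rw [if_neg hgs]
      · intro s jv hjv
        exact hv'low s jv (hne_vm1 _ (by omega))
    · have hjm1 : j = vm1 := Fin.ext (by
        change j.val ≤ m + 1 at hj
        show j.val = m+1
        omega)
      subst hjm1
      rw [hfam]
      exact hw_ind.comp e2 e2.injective
  · -- hspan
    intro j hj
    by_cases hjm : j.val ≤ m
    · refine (step_low D a' b' v' (fun s => rfl) ?_ (fun i => rfl) ?_ j hjm).2
      · intro s jj hjj
        rw [hb'if]
        by_cases hgs : gate s
        · rw [if_pos hgs, hgs.1]
          constructor <;> intro <;> omega
        · rw [if_neg hgs]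
      · intro s jv hjv
        exact hv'low s jv (hne_vm1 _ (by omega))
    · have hjm1 : j = vm1 := Fin.ext (by
        change j.val ≤ m + 1 at hj
        show j.val = m+1
        omega)
      subst hjm1
      rw [hfam, Function.Surjective.range_comp e2.surjective]
      rw [eq_top_iff]
      intro y _
      exact himg y
  · -- hadapt
    intro W hW
    have := hadapt_top W hW
    rw [hfam, Function.Surjective.range_comp e2.surjective]
    exact this

end StepSource
section Final
variable {k : Type u} [Field k] {n : ℕ}
  {V : Fin (n+1) → Type u} [∀ j, AddCommGroup (V j)] [∀ j, Module k (V j)]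
  {f : ∀ i : Fin n, V i.castSucc →ₗ[k] V i.succ}
  {g : ∀ i : Fin n, V i.succ →ₗ[k] V i.castSucc}

lemma SD_exists (horient : ∀ i : Fin n, f i = 0 ∨ g i = 0) :
    ∀ (m : ℕ) (hm : m < n+1) (L : List (Submodule k (V ⟨m, hm⟩))), L.Pairwise (· ≤ ·) →
      Nonempty (SD f g m hm L) := by
  intro m
  induction m with
  | zero => exact fun hm L hL => SD_base f g hm L hL
  | succ m ih =>
    intro hm1 L hL
    have hmn : m < n := by omega
    have hm : m < n+1 := by omega
    rcases horient ⟨m, hmn⟩ with hf | hg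
    · exact SD_step_source m hmn hm hm1 hf L hL (fun L' hL' => ih hm L' hL')
    · exact SD_step_sink m hmn hm hm1 hg L hL (fun L' hL' => ih hm L' hL')

lemma span_map_le_pair {X Y : Type u} [AddCommGroup X] [Module k X] [AddCommGroup Y] [Module k Y]
    (F : X →ₗ[k] Y) (v : X) (w : Y) (h : F v = w ∨ F v = 0) :
    Submodule.map F (span k {v}) ≤ span k {w} := by
  rw [Submodule.map_span, Set.image_singleton]
  rcases h with h | h
  · rw [h]
  · rw [h, Submodule.span_zero_singleton]
    exact bot_le

end Final

/-- A subrepresentation of a representation of a quiver with underlying graph `Aₙ`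
(vertices `0, 1, …, n`; for each `i` the edge between `i` and `i+1` carries a forward
map `f i` and a backward map `g i`, one of which is zero, recording the orientation):
a family of subspaces stable under all the structure maps. -/
def IsSubrep (k : Type u) [Field k] (n : ℕ)
    (V : Fin (n+1) → Type u) [∀ j, AddCommGroup (V j)] [∀ j, Module k (V j)]
    (f : ∀ i : Fin n, V i.castSucc →ₗ[k] V i.succ)
    (g : ∀ i : Fin n, V i.succ →ₗ[k] V i.castSucc)
    (W : ∀ j, Submodule k (V j)) : Prop :=
  ∀ i : Fin n, (W i.castSucc).map (f i) ≤ W i.succ ∧ (W i.succ).map (g i) ≤ W i.castSucc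

/-- Every representation (not necessarily finite-dimensional) of a quiver whose underlying
graph is a Dynkin diagram of type `Aₙ` (any orientation, encoded by the requirement that for
each edge one of the two maps vanishes) is a direct sum of finite-dimensional indecomposable
subrepresentations. -/
theorem stmt19 (k : Type u) [Field k] (n : ℕ)
    (V : Fin (n+1) → Type u) [∀ j, AddCommGroup (V j)] [∀ j, Module k (V j)]
    (f : ∀ i : Fin n, V i.castSucc →ₗ[k] V i.succ)
    (g : ∀ i : Fin n, V i.succ →ₗ[k] V i.castSucc)
    (horient : ∀ i : Fin n, f i = 0 ∨ g i = 0) :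
    ∃ (ι : Type u) (_ : DecidableEq ι) (W : ι → ∀ j, Submodule k (V j)),
      -- each summand is a subrepresentation ...
      (∀ c, IsSubrep k n V f g (W c)) ∧
      -- ... the summands decompose each vertex space as an (internal) direct sum ...
      (∀ j : Fin (n+1), DirectSum.IsInternal (fun c => W c j)) ∧
      -- ... each summand is finite-dimensional ...
      (∀ c j, FiniteDimensional k (W c j)) ∧
      -- ... and each summand is an indecomposable representation.
      (∀ c, (¬ ∀ j, W c j = ⊥) ∧
        ∀ (U U' : ∀ j, Submodule k (V j)), IsSubrep k n V f g U → IsSubrep k n V f g U' →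
          (∀ j, U j ⊔ U' j = W c j) → (∀ j, U j ⊓ U' j = ⊥) →
          (∀ j, U j = ⊥) ∨ (∀ j, U' j = ⊥)) := by
  classical
  obtain ⟨D⟩ := SD_exists (f := f) (g := g) horient n n.lt_succ_self [] List.Pairwise.nil
  have hnz : ∀ s (j : Fin (n+1)), D.a s ≤ j.val → j.val ≤ D.b s → D.v s j ≠ 0 := by
    intro s j h1 h2
    have hj : j.val ≤ n := by have := j.isLt; omega
    exact (D.hindep j hj).ne_zero ⟨s, ⟨h1, h2⟩⟩
  refine ⟨D.σ, Classical.decEq _, fun s j => span k {D.v s j}, ?_, ?_, ?_, ?_⟩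
  · -- IsSubrep
    intro c i
    have hilt := i.isLt
    constructor
    · apply span_map_le_pair
      by_cases h1 : D.a c ≤ i.val ∧ i.val + 1 ≤ D.b c
      · rcases D.hcross c i h1.1 (by omega) with hc | hc
        · exact Or.inl hc
        · right
          have hgz : g i ≠ 0 := by
            intro h0
            refine hnz c i.castSucc h1.1 (show i.val ≤ D.b c by omega) ?_
            rw [← hc, h0]
            rfl
          have hfz : f i = 0 := (horient i).resolve_right hgz
          rw [hfz]
          rfl
      · push_neg at h1
        by_cases h2 : D.b c = i.val
        · exact Or.inr (D.hendf c i (by omega) h2)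
        · right
          have hv0 : D.v c i.castSucc = 0 := by
            apply D.hzero
            have hcs : (i.castSucc).val = i.val := rfl
            by_cases ha : D.a c ≤ i.val
            · right; have := h1 ha; omega
            · left; omega
          rw [hv0, map_zero]
    · apply span_map_le_pair
      by_cases h1 : D.a c ≤ i.val ∧ i.val + 1 ≤ D.b c
      · rcases D.hcross c i h1.1 (by omega) with hc | hc
        · right
          have hfz : f i ≠ 0 := by
            intro h0
            refine hnz c i.succ (show D.a c ≤ i.val + 1 by omega)
              (show i.val + 1 ≤ D.b c from h1.2) ?_
            rw [← hc, h0]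
            rfl
          have hgz : g i = 0 := (horient i).resolve_left hfz
          rw [hgz]
          rfl
        · exact Or.inl hc
      · push_neg at h1
        by_cases h2 : D.a c = i.val + 1
        · exact Or.inr (D.hstartg c i (by omega) h2)
        · right
          have hv0 : D.v c i.succ = 0 := by
            apply D.hzero
            have hsc : (i.succ).val = i.val + 1 := rfl
            by_cases ha : D.a c ≤ i.val
            · right; have := h1 ha; omega
            · left; omega
          rw [hv0, map_zero]
  · -- IsInternal
    intro j
    have hj : j.val ≤ n := by have := j.isLt; omega
    rw [DirectSum.isInternal_submodule_iff_iSupIndep_and_iSup_eq_top]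
    constructor
    · rw [iSupIndep_def]
      intro s
      show Disjoint (span k {D.v s j}) (⨆ (s' : D.σ) (_ : s' ≠ s), span k {D.v s' j})
      by_cases hs : D.a s ≤ j.val ∧ j.val ≤ D.b s
      · have hT := (D.hindep j hj).iSupIndep_span_singleton
        rw [iSupIndep_def] at hT
        refine Disjoint.mono_right ?_ (hT ⟨s, hs⟩)
        refine iSup_le fun s' => iSup_le fun hs' => ?_
        by_cases hs'2 : D.a s' ≤ j.val ∧ j.val ≤ D.b s'
        · have hne : (⟨s', hs'2⟩ : {x : D.σ // D.a x ≤ j.val ∧ j.val ≤ D.b x}) ≠ ⟨s, hs⟩ := by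
            intro h
            exact hs' (congrArg Subtype.val h)
          exact le_iSup_of_le ⟨s', hs'2⟩ (le_iSup_of_le hne (le_refl _))
        · have h0 : D.v s' j = 0 := D.hzero s' j (by omega)
          rw [h0, Submodule.span_zero_singleton]
          exact bot_le
      · have h0 : D.v s j = 0 := D.hzero s j (by omega)
        rw [h0, Submodule.span_zero_singleton]
        exact disjoint_bot_left
    · apply le_antisymm le_top
      calc ⊤ = span k (range (fun t : {x : D.σ // D.a x ≤ j.val ∧ j.val ≤ D.b x} =>
              D.v t.1 j)) := (D.hspan j hj).symm
        _ = ⨆ t : {x : D.σ // D.a x ≤ j.val ∧ j.val ≤ D.b x}, span k {D.v t.1 j} :=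
              span_range_eq_iSup
        _ ≤ ⨆ s, span k {D.v s j} := iSup_le fun t => le_iSup_of_le t.1 (le_refl _)
  · -- finite dimensional
    intro c j
    exact FiniteDimensional.span_singleton _ _
  · -- indecomposability
    intro c
    constructor
    · intro hall
      have hab := D.ha c
      have hbn := D.hb c
      have hblt : D.b c < n + 1 := by omega
      have hbot := hall ⟨D.b c, hblt⟩
      rw [Submodule.span_singleton_eq_bot] at hbot
      exact hnz c ⟨D.b c, hblt⟩ hab (le_refl _) hbot
    · intro U U' hU hU' hsup hinf
      by_cases hUbot : ∀ j, U j = ⊥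
      · exact Or.inl hUbot
      right
      push_neg at hUbot
      obtain ⟨j0, hj0⟩ := hUbot
      have hUle : ∀ j, U j ≤ span k {D.v c j} := fun j => le_of_le_of_eq le_sup_left (hsup j)
      have hU'le : ∀ j, U' j ≤ span k {D.v c j} := fun j => le_of_le_of_eq le_sup_right (hsup j)
      -- one-step propagation lemmas (symmetric in the two summands)
      have semistep : ∀ (Ua Ub : ∀ j, Submodule k (V j)), IsSubrep k n V f g Ua →
          IsSubrep k n V f g Ub →
          (∀ j, Ua j ⊔ Ub j = span k {D.v c j}) → (∀ j, Ua j ⊓ Ub j = ⊥) →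
          ∀ (iE : Fin n), D.a c ≤ iE.val → iE.val < D.b c →
          D.v c iE.castSucc ∈ Ua iE.castSucc → D.v c iE.succ ∈ Ua iE.succ := by
        intro Ua Ub hUa hUb hs hi iE hA hB hv
        rcases D.hcross c iE hA hB with hc | hc
        · exact (hUa iE).1 ⟨_, hv, hc⟩
        · by_contra hnot
          have hUa_bot : Ua iE.succ = ⊥ := by
            rcases span_singleton_le_cases (le_of_le_of_eq le_sup_left (hs iE.succ)) with h | h
            · exact h
            · rw [h] at hnot
              exact absurd (Submodule.mem_span_singleton_self _) hnot
          have hUb_full : Ub iE.succ = span k {D.v c iE.succ} := by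
            have hx := hs iE.succ
            rw [hUa_bot, bot_sup_eq] at hx
            exact hx
          have hvb : D.v c iE.succ ∈ Ub iE.succ := by
            rw [hUb_full]
            exact Submodule.mem_span_singleton_self _
          have hvcb : D.v c iE.castSucc ∈ Ub iE.castSucc := (hUb iE).2 ⟨_, hvb, hc⟩
          have hboth : D.v c iE.castSucc ∈ Ua iE.castSucc ⊓ Ub iE.castSucc := ⟨hv, hvcb⟩
          rw [hi iE.castSucc] at hboth
          exact hnz c iE.castSucc hA (show (iE.castSucc).val ≤ D.b c by
            have : (iE.castSucc).val = iE.val := rfl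
            omega) ((Submodule.mem_bot k).1 hboth)
      have semistep_down : ∀ (Ua Ub : ∀ j, Submodule k (V j)), IsSubrep k n V f g Ua →
          IsSubrep k n V f g Ub →
          (∀ j, Ua j ⊔ Ub j = span k {D.v c j}) → (∀ j, Ua j ⊓ Ub j = ⊥) →
          ∀ (iE : Fin n), D.a c ≤ iE.val → iE.val < D.b c →
          D.v c iE.succ ∈ Ua iE.succ → D.v c iE.castSucc ∈ Ua iE.castSucc := by
        intro Ua Ub hUa hUb hs hi iE hA hB hv
        rcases D.hcross c iE hA hB with hc | hc
        · by_contra hnot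
          have hUa_bot : Ua iE.castSucc = ⊥ := by
            rcases span_singleton_le_cases (le_of_le_of_eq le_sup_left (hs iE.castSucc)) with h | h
            · exact h
            · rw [h] at hnot
              exact absurd (Submodule.mem_span_singleton_self _) hnot
          have hUb_full : Ub iE.castSucc = span k {D.v c iE.castSucc} := by
            have hx := hs iE.castSucc
            rw [hUa_bot, bot_sup_eq] at hx
            exact hx
          have hvb : D.v c iE.castSucc ∈ Ub iE.castSucc := by
            rw [hUb_full]
            exact Submodule.mem_span_singleton_self _
          have hvcb : D.v c iE.succ ∈ Ub iE.succ := (hUb iE).1 ⟨_, hvb, hc⟩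
          have hboth : D.v c iE.succ ∈ Ua iE.succ ⊓ Ub iE.succ := ⟨hv, hvcb⟩
          rw [hi iE.succ] at hboth
          exact hnz c iE.succ (show D.a c ≤ (iE.succ).val by
            have : (iE.succ).val = iE.val + 1 := rfl
            omega) (show (iE.succ).val ≤ D.b c by
            have : (iE.succ).val = iE.val + 1 := rfl
            omega) ((Submodule.mem_bot k).1 hboth)
        · exact (hUa iE).2 ⟨_, hv, hc⟩
      -- propagation along the support interval
      set P : ℕ → Prop := fun p => ∀ (hp : p < n+1), D.v c ⟨p, hp⟩ ∈ U ⟨p, hp⟩ with hP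
      have hup : ∀ (d p : ℕ), D.a c ≤ p → p + d ≤ D.b c → P p → P (p + d) := by
        intro d
        induction d with
        | zero => intro p _ _ hp; exact hp
        | succ d ih =>
          intro p h1 h2 hp
          have hd : P (p + d) := ih p h1 (by omega) hp
          intro hlt
          have hbn := D.hb c
          have hedge : p + d < n := by omega
          have := semistep U U' hU hU' hsup hinf ⟨p + d, hedge⟩ (by
            show D.a c ≤ p + d; omega) (by show p + d < D.b c; omega)
            (hd (by omega))
          exact this
      have hdown : ∀ (d p : ℕ), D.a c ≤ p → p + d ≤ D.b c → P (p + d) → P p := by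
        intro d
        induction d with
        | zero => intro p _ _ hp; exact hp
        | succ d ih =>
          intro p h1 h2 hp
          have hd : P (p + 1) := by
            refine ih (p+1) (by omega) (by omega) ?_
            have : p + 1 + d = p + (d + 1) := by omega
            rw [this]
            exact hp
          intro hlt
          have hbn := D.hb c
          have hedge : p < n := by omega
          exact semistep_down U U' hU hU' hsup hinf ⟨p, hedge⟩ (by show D.a c ≤ p; omega)
            (by show p < D.b c; omega) (hd (by omega))
      -- U is full at j0
      have hj0r : D.a c ≤ j0.val ∧ j0.val ≤ D.b c := by
        by_contra hr
        apply hj0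
        rw [eq_bot_iff]
        refine le_trans (hUle j0) ?_
        have h0 : D.v c j0 = 0 := D.hzero c j0 (by omega)
        rw [h0, Submodule.span_zero_singleton]
      have hPj0 : P j0.val := by
        intro hp
        have hjeq : (⟨j0.val, hp⟩ : Fin (n+1)) = j0 := Fin.ext rfl
        rw [hjeq]
        rcases span_singleton_le_cases (hUle j0) with h | h
        · exact absurd h hj0
        · rw [h]
          exact Submodule.mem_span_singleton_self _
      -- conclude
      intro j
      by_cases hjr : D.a c ≤ j.val ∧ j.val ≤ D.b c
      · have hPj : P j.val := by
          by_cases hcmp : j0.val ≤ j.val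
          · have := hup (j.val - j0.val) j0.val hj0r.1 (by omega) hPj0
            have heq : j0.val + (j.val - j0.val) = j.val := by omega
            rwa [heq] at this
          · have heq : j.val + (j0.val - j.val) = j0.val := by omega
            refine hdown (j0.val - j.val) j.val hjr.1 (by omega) ?_
            rwa [heq]
        have hvU : D.v c j ∈ U j := by
          have := hPj j.isLt
          have hjeq : (⟨j.val, j.isLt⟩ : Fin (n+1)) = j := Fin.ext rfl
          rwa [hjeq] at this
        rcases span_singleton_le_cases (hU'le j) with h | h
        · exact h
        · exfalso
          have hvU' : D.v c j ∈ U' j := by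
            rw [h]
            exact Submodule.mem_span_singleton_self _
          have hboth : D.v c j ∈ U j ⊓ U' j := ⟨hvU, hvU'⟩
          rw [hinf j] at hboth
          exact hnz c j hjr.1 hjr.2 ((Submodule.mem_bot k).1 hboth)
      · rw [eq_bot_iff]
        refine le_trans (hU'le j) ?_
        have h0 : D.v c j = 0 := D.hzero c j (by omega)
        rw [h0, Submodule.span_zero_singleton]
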